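/- Let G be a group with two actions ρ₁, ρ₂ : G → Homeo(ℝ) on the real line by homeomorphisms, with ρ₁ minimal. Let S be the set of strictly increasing homeomorphisms f : ℝ → ℝ equivariant from ρ₁ to ρ₂; assume S is nonempty and fix f₀ ∈ S. Suppose that for some x₀ ∈ ℝ the set {f(x₀) : f ∈ S} has an accumulation point in ℝ. Then both actions are topologically conjugate to actions by translations with the same translation amounts: there exist a homeomorphism φ : ℝ → ℝ and a map r : G → ℝ with r(γγ′) = r(γ) + r(γ′) for all γ, γ′ ∈ G, such that φ(ρ₁(γ)(x)) = φ(x) + r(γ) for all γ ∈ G and x ∈ ℝ, and such that the homeomorphism ψ := φ ∘ f₀⁻¹ satisfies ψ(ρ₂(γ)(y)) = ψ(y) + r(γ) for all γ ∈ G and y ∈ ℝ. -/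

import Mathlib

set_option linter.unusedSectionVars false

open Set Filter Topology

noncomputable section HolderDev

variable {G : Type*} [Group G]

/-- The (increasing) centralizer predicate. -/
def IsCen (ρ : G → ℝ ≃ₜ ℝ) (c : Equiv.Perm ℝ) : Prop :=
  StrictMono ⇑c ∧ ∀ (γ : G) (x : ℝ), c (ρ γ x) = ρ γ (c x)

variable {ρ : G → ℝ ≃ₜ ℝ}

theorem Equiv.Perm.apply_inv_self {α : Type*} (f : Equiv.Perm α) (x : α) : f (f⁻¹ x) = x :=
  f.apply_symm_apply x

theorem Equiv.Perm.inv_apply_self {α : Type*} (f : Equiv.Perm α) (x : α) : f⁻¹ (f x) = x :=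
  f.symm_apply_apply x

theorem IsCen.one : IsCen ρ 1 :=
  ⟨fun _ _ hab => hab, fun _ _ => rfl⟩

theorem IsCen.mul {c d : Equiv.Perm ℝ} (hc : IsCen ρ c) (hd : IsCen ρ d) :
    IsCen ρ (c * d) := by
  refine ⟨fun a b hab => ?_, fun γ x => ?_⟩
  · exact hc.1 (hd.1 hab)
  · simp only [Equiv.Perm.mul_apply, hd.2, hc.2]

theorem strictMono_perm_inv {c : Equiv.Perm ℝ} (hc : StrictMono ⇑c) :
    StrictMono ⇑c⁻¹ := by
  intro a b hab
  rw [← hc.lt_iff_lt]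
  simpa only [Equiv.Perm.apply_inv_self] using hab

theorem IsCen.inv {c : Equiv.Perm ℝ} (hc : IsCen ρ c) : IsCen ρ c⁻¹ := by
  refine ⟨strictMono_perm_inv hc.1, fun γ x => ?_⟩
  apply c.injective
  rw [Equiv.Perm.apply_inv_self, hc.2, Equiv.Perm.apply_inv_self]

theorem IsCen.pow {c : Equiv.Perm ℝ} (hc : IsCen ρ c) (n : ℕ) : IsCen ρ (c ^ n) := by
  induction n with
  | zero => simpa using (IsCen.one : IsCen ρ 1)
  | succ n ih => rw [pow_succ]; exact ih.mul hc

theorem IsCen.zpow {c : Equiv.Perm ℝ} (hc : IsCen ρ c) (m : ℤ) : IsCen ρ (c ^ m) := by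
  rcases m with n | n
  · simpa using hc.pow n
  · rw [zpow_negSucc]; exact (hc.pow (n + 1)).inv

/-- A strictly monotone bijection of `ℝ` is continuous. -/
theorem strictMono_perm_continuous {c : Equiv.Perm ℝ} (hc : StrictMono ⇑c) :
    Continuous ⇑c := by
  exact (StrictMono.orderIsoOfSurjective ⇑c hc c.surjective).toHomeomorph.continuous

section minimal

variable (hmin : ∀ x : ℝ, Dense {y : ℝ | ∃ γ : G, ρ γ x = y})

include hmin

/-- Freeness: a centralizer element with a fixed point is the identity. -/
theorem IsCen.eq_id_of_fixed {c : Equiv.Perm ℝ} (hc : IsCen ρ c) {x : ℝ}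
    (hx : c x = x) : ∀ y, c y = y := by
  intro y
  have hcl : IsClosed {y : ℝ | c y = y} :=
    isClosed_eq (strictMono_perm_continuous hc.1) continuous_id
  have horb : {y : ℝ | ∃ γ : G, ρ γ x = y} ⊆ {y : ℝ | c y = y} := by
    rintro _ ⟨γ, rfl⟩
    rw [mem_setOf_eq, hc.2, hx]
  have h2 := closure_minimal horb hcl
  rw [(hmin x).closure_eq] at h2
  exact h2 (mem_univ y)

/-- Trichotomy: a centralizer element is the identity, or moves every point up, or down. -/
theorem IsCen.trichotomy {c : Equiv.Perm ℝ} (hc : IsCen ρ c) :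
    (∀ x, c x = x) ∨ (∀ x, x < c x) ∨ (∀ x, c x < x) := by
  by_cases hfix : ∃ x, c x = x
  · exact Or.inl (hc.eq_id_of_fixed hmin hfix.choose_spec)
  · push_neg at hfix
    right
    by_contra hcon
    push_neg at hcon
    obtain ⟨⟨u, hu⟩, ⟨v, hv⟩⟩ := hcon
    have hu' : c u - u ≤ 0 := by linarith [lt_of_le_of_ne hu (hfix u)]
    have hv' : 0 ≤ c v - v := by linarith [lt_of_le_of_ne hv fun e => hfix v e.symm]
    have hcont : Continuous fun x => c x - x :=
      (strictMono_perm_continuous hc.1).sub continuous_id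
    have hmem : (0 : ℝ) ∈ Set.uIcc (c u - u) (c v - v) := by
      rw [Set.mem_uIcc]; left; exact ⟨hu', hv'⟩
    obtain ⟨z, _, hz⟩ := intermediate_value_uIcc (f := fun x => c x - x)
      hcont.continuousOn hmem
    exact hfix z (by dsimp at hz; linarith [hz] : c z = z)

/-- Transfer of `≤` at one point to everywhere. -/
theorem IsCen.le_transfer {c d : Equiv.Perm ℝ} (hc : IsCen ρ c) (hd : IsCen ρ d)
    {z : ℝ} (hz : c z ≤ d z) : ∀ x, c x ≤ d x := by
  intro x
  have he : IsCen ρ (d⁻¹ * c) := hd.inv.mul hc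
  rcases he.trichotomy hmin with H | H | H
  · have h1 := H x
    rw [Equiv.Perm.mul_apply] at h1
    have h2 := congrArg d h1
    rw [Equiv.Perm.apply_inv_self] at h2
    exact h2.le
  · exfalso
    have h1 := H z
    rw [Equiv.Perm.mul_apply] at h1
    have h2 := hd.1 h1
    rw [Equiv.Perm.apply_inv_self] at h2
    exact absurd hz (not_le.mpr h2)
  · have h1 := H x
    rw [Equiv.Perm.mul_apply] at h1
    have h2 := hd.1 h1
    rw [Equiv.Perm.apply_inv_self] at h2
    exact h2.le

/-- Transfer of `<` at one point to everywhere. -/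
theorem IsCen.lt_transfer {c d : Equiv.Perm ℝ} (hc : IsCen ρ c) (hd : IsCen ρ d)
    {z : ℝ} (hz : c z < d z) : ∀ x, c x < d x := by
  intro x
  have hle := hc.le_transfer hmin hd hz.le x
  rcases hle.lt_or_eq with H | H
  · exact H
  · exfalso
    have he : IsCen ρ (d⁻¹ * c) := hd.inv.mul hc
    have hfix : (d⁻¹ * c) x = x := by
      rw [Equiv.Perm.mul_apply, H, Equiv.Perm.inv_apply_self]
    have h1 := he.eq_id_of_fixed hmin hfix z
    rw [Equiv.Perm.mul_apply] at h1
    have h2 := congrArg d h1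
    rw [Equiv.Perm.apply_inv_self] at h2
    exact hz.ne h2

end minimal

/-- Iterates of an everywhere-increasing strictly monotone permutation are unbounded above. -/
theorem unbounded_orbit {e : Equiv.Perm ℝ} (hmono : StrictMono ⇑e)
    (hepos : ∀ x, x < e x) (y B : ℝ) : ∃ n : ℕ, B < (e ^ n) y := by
  by_contra hcon
  push_neg at hcon
  set s := sSup (Set.range fun n : ℕ => (e ^ n) y) with hs
  have hne : (Set.range fun n : ℕ => (e ^ n) y).Nonempty := ⟨y, 0, by simp⟩
  have hbdd : BddAbove (Set.range fun n : ℕ => (e ^ n) y) :=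
    ⟨B, by rintro _ ⟨n, rfl⟩; exact hcon n⟩
  have hstep : ∀ n : ℕ, (e ^ (n + 1)) y = e ((e ^ n) y) := by
    intro n; rw [pow_succ']; rfl
  have hmap : e s = sSup ((⇑e) '' Set.range fun n : ℕ => (e ^ n) y) :=
    (StrictMono.orderIsoOfSurjective ⇑e hmono e.surjective).map_csSup' hne hbdd
  have himg : (⇑e) '' (Set.range fun n : ℕ => (e ^ n) y)
      = Set.range fun n : ℕ => (e ^ (n + 1)) y := by
    rw [← Set.range_comp]
    apply congrArg
    funext n
    simp only [Function.comp_apply]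
    exact (hstep n).symm
  have hsup2 : sSup (Set.range fun n : ℕ => (e ^ (n + 1)) y) = s := by
    apply le_antisymm
    · refine csSup_le (Set.range_nonempty _) ?_
      rintro _ ⟨n, rfl⟩
      exact le_csSup hbdd ⟨n + 1, rfl⟩
    · refine csSup_le hne ?_
      rintro _ ⟨n, rfl⟩
      have h1 : (e ^ n) y ≤ (e ^ (n + 1)) y := by rw [hstep n]; exact (hepos _).le
      exact h1.trans (le_csSup (BddAbove.mono
        (by rintro _ ⟨m, rfl⟩; exact ⟨m + 1, rfl⟩) hbdd) ⟨n, rfl⟩)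
  rw [himg, hsup2] at hmap
  exact absurd hmap (ne_of_gt (hepos s))

section powers

variable {e : Equiv.Perm ℝ} (he : IsCen ρ e) (hepos : ∀ x, x < e x)

include hepos in
theorem perm_pow_ge (n : ℕ) (x : ℝ) : x ≤ (e ^ n) x := by
  induction n with
  | zero => simp
  | succ n ih =>
    have : (e ^ (n + 1)) x = e ((e ^ n) x) := by rw [pow_succ']; rfl
    rw [this]
    exact ih.trans (hepos _).le

include hepos in
theorem perm_pow_gt {n : ℕ} (hn : 1 ≤ n) (x : ℝ) : x < (e ^ n) x := by
  obtain ⟨m, rfl⟩ := Nat.exists_eq_add_of_le hn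
  have : (e ^ (1 + m)) x = e ((e ^ m) x) := by rw [add_comm, pow_succ']; rfl
  rw [this]
  exact lt_of_le_of_lt (perm_pow_ge hepos m x) (hepos _)

include hepos in
theorem perm_zpow_ge {m : ℤ} (hm : 0 ≤ m) (x : ℝ) : x ≤ (e ^ m) x := by
  lift m to ℕ using hm
  rw [zpow_natCast]
  exact perm_pow_ge hepos m x

include he hepos in
theorem perm_zpow_mono_exp {m m' : ℤ} (hmm : m ≤ m') (x : ℝ) :
    (e ^ m) x ≤ (e ^ m') x := by
  have h1 : (e ^ m') x = (e ^ m) ((e ^ (m' - m)) x) := by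
    rw [← Equiv.Perm.mul_apply, ← zpow_add]
    norm_num
  rw [h1]
  exact ((he.zpow m).1).monotone (perm_zpow_ge hepos (by omega) x)

include he hepos in
theorem perm_zpow_strict_exp {m m' : ℤ} (hmm : m < m') (x : ℝ) :
    (e ^ m) x < (e ^ m') x := by
  have h1 : (e ^ m') x = (e ^ m) ((e ^ (m' - m)) x) := by
    rw [← Equiv.Perm.mul_apply, ← zpow_add]
    norm_num
  rw [h1]
  refine (he.zpow m).1 ?_
  have h2 : (m' - m) = ((m' - m).toNat : ℤ) := by omega
  rw [h2, zpow_natCast]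
  exact perm_pow_gt hepos (by omega) x

include he hepos in
theorem perm_zpow_cancel (m : ℤ) (x : ℝ) : (e ^ (-m)) ((e ^ m) x) = x := by
  rw [← Equiv.Perm.mul_apply, ← zpow_add]
  norm_num

variable (hmin : ∀ x : ℝ, Dense {y : ℝ | ∃ γ : G, ρ γ x = y})

include he hepos hmin in
/-- Archimedean division: every centralizer element lies between consecutive powers of `e`. -/
theorem exists_div {c : Equiv.Perm ℝ} (hc : IsCen ρ c) :
    ∃ m : ℤ, (∀ x, (e ^ m) x ≤ c x) ∧ (∀ x, c x < (e ^ (m + 1)) x) := by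
  set A := {m : ℤ | (e ^ m) 0 ≤ c 0} with hA
  have hAne : A.Nonempty := by
    obtain ⟨n, hn⟩ := unbounded_orbit he.1 hepos (c 0) 0
    refine ⟨-(n : ℤ), ?_⟩
    have h2 : (e ^ (-(n : ℤ))) 0 ≤ (e ^ (-(n : ℤ))) ((e ^ (n : ℤ)) (c 0)) :=
      ((he.zpow _).1).monotone (by rw [zpow_natCast]; exact hn.le)
    rwa [perm_zpow_cancel he hepos] at h2
  have hAbdd : BddAbove A := by
    obtain ⟨n, hn⟩ := unbounded_orbit he.1 hepos 0 (c 0)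
    refine ⟨(n : ℤ), ?_⟩
    rintro m hm
    by_contra hcon
    push_neg at hcon
    have h3 : (e ^ (n : ℤ)) 0 ≤ (e ^ m) 0 := perm_zpow_mono_exp he hepos hcon.le 0
    rw [zpow_natCast] at h3
    exact absurd (h3.trans hm) (not_le.mpr hn)
  set m := sSup A with hm
  have hmem : m ∈ A := Int.csSup_mem hAne hAbdd
  have hnot : m + 1 ∉ A := fun hmem1 => by
    have := le_csSup hAbdd hmem1
    omega
  refine ⟨m, ?_, ?_⟩
  · exact (he.zpow m).le_transfer hmin hc hmem
  · have h4 : c 0 < (e ^ (m + 1)) 0 := not_le.mp hnot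
    exact hc.lt_transfer hmin (he.zpow (m + 1)) h4

end powers

section holder

variable (hmin : ∀ x : ℝ, Dense {y : ℝ | ∃ γ : G, ρ γ x = y})
variable (hsmall : ∀ c : Equiv.Perm ℝ, IsCen ρ c → (∀ x, x < c x) →
    ∃ u : Equiv.Perm ℝ, IsCen ρ u ∧ (∀ x, x < u x) ∧ (∀ x, u x < c x))

include hmin in
theorem no_pos_commutator {c d : Equiv.Perm ℝ} (hc : IsCen ρ c) (hd : IsCen ρ d)
    (hsmall' : ∀ cc : Equiv.Perm ℝ, IsCen ρ cc → (∀ x, x < cc x) →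
      ∃ u : Equiv.Perm ℝ, IsCen ρ u ∧ (∀ x, x < u x) ∧ (∀ x, u x < cc x)) :
    ¬ (∀ x, x < (c * d * c⁻¹ * d⁻¹) x) := by
  intro hcomm
  set k := c * d * c⁻¹ * d⁻¹ with hkdef
  have hk : IsCen ρ k := ((hc.mul hd).mul hc.inv).mul hd.inv
  -- The key bound: the commutator is smaller than the square of any positive element.
  have hbound : ∀ ε : Equiv.Perm ℝ, IsCen ρ ε → (∀ x, x < ε x) → ∀ x, k x < ε (ε x) := by
    intro ε hε hεpos x
    obtain ⟨m, hm1, hm2⟩ := exists_div hε hεpos hmin hc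
    obtain ⟨n, hn1, hn2⟩ := exists_div hε hεpos hmin hd
    have hcd_low : ∀ z, (ε ^ (m + n)) z ≤ (c * d) z := by
      intro z
      have h1 : (ε ^ (m + n)) z = (ε ^ m) ((ε ^ n) z) := by
        rw [← Equiv.Perm.mul_apply, ← zpow_add]
      rw [h1, Equiv.Perm.mul_apply]
      exact ((hm1 (d z)).trans' (((hε.zpow m).1).monotone (hn1 z)))
    have hdc_low : ∀ z, (ε ^ (m + n)) z ≤ (d * c) z := by
      intro z
      have h1 : (ε ^ (m + n)) z = (ε ^ n) ((ε ^ m) z) := by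
        rw [← Equiv.Perm.mul_apply, ← zpow_add, add_comm]
      rw [h1, Equiv.Perm.mul_apply]
      exact ((hn1 (c z)).trans' (((hε.zpow n).1).monotone (hm1 z)))
    have hcd_up : ∀ z, (c * d) z < (ε ^ (m + n + 2)) z := by
      intro z
      have h1 : (ε ^ (m + n + 2)) z = (ε ^ (m + 1)) ((ε ^ (n + 1)) z) := by
        rw [show m + n + 2 = (m + 1) + (n + 1) by ring, zpow_add, Equiv.Perm.mul_apply]
      rw [h1, Equiv.Perm.mul_apply]
      exact (hm2 (d z)).trans_le (((hε.zpow (m + 1)).1).monotone (hn2 z).le)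
    -- now k x = (c*d) ((d*c)⁻¹ x)
    have hkx : k x = (c * d) ((d * c)⁻¹ x) := by
      rw [hkdef]
      have : c * d * c⁻¹ * d⁻¹ = (c * d) * (d * c)⁻¹ := by group
      rw [this, Equiv.Perm.mul_apply]
    set y := (d * c)⁻¹ x with hy
    have hdcx : (d * c) y = x := Equiv.Perm.apply_inv_self _ _
    have hxy : (ε ^ (m + n)) y ≤ x := by rw [← hdcx]; exact hdc_low y
    have hy_le : y ≤ (ε ^ (-(m + n))) x := by
      have h2 := ((hε.zpow (-(m + n))).1).monotone hxy
      rwa [perm_zpow_cancel hε hεpos] at h2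
    have h5 : k x < (ε ^ (m + n + 2)) y := by rw [hkx]; exact hcd_up y
    have h6 : (ε ^ (m + n + 2)) y ≤ (ε ^ (m + n + 2)) ((ε ^ (-(m + n))) x) :=
      ((hε.zpow (m + n + 2)).1).monotone hy_le
    have h7 : (ε ^ (m + n + 2)) ((ε ^ (-(m + n))) x) = ε (ε x) := by
      rw [← Equiv.Perm.mul_apply, ← zpow_add]
      have : m + n + 2 + -(m + n) = 2 := by omega
      rw [this]
      have h8 : (ε ^ (2 : ℤ)) = ε * ε := by
        rw [show (2 : ℤ) = 1 + 1 by norm_num, zpow_add, zpow_one]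
      rw [h8, Equiv.Perm.mul_apply]
    exact h5.trans_le (h6.trans_eq h7)
  -- get a small positive element below k, and then the minimum trick
  obtain ⟨u, hu, hupos, huk⟩ := hsmall' k hk hcomm
  have huik : IsCen ρ (u⁻¹ * k) := hu.inv.mul hk
  have huikpos : ∀ x, x < (u⁻¹ * k) x := by
    intro x
    rw [Equiv.Perm.mul_apply]
    have h2 := strictMono_perm_inv hu.1 (huk x)
    rwa [Equiv.Perm.inv_apply_self] at h2
  -- v := min(u, u⁻¹k)
  rcases le_total (u 0) ((u⁻¹ * k) 0) with hcase | hcase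
  · -- v = u
    have hv2 : ∀ x, u x ≤ (u⁻¹ * k) x := hu.le_transfer hmin huik hcase
    have hsq : ∀ x, u (u x) ≤ k x := by
      intro x
      have h1 : u (u x) ≤ u ((u⁻¹ * k) x) := hu.1.monotone (hv2 x)
      rwa [Equiv.Perm.mul_apply, Equiv.Perm.apply_inv_self] at h1
    exact absurd (hsq 0) (not_le.mpr (hbound u hu hupos 0))
  · -- v = u⁻¹k
    have hv1 : ∀ x, (u⁻¹ * k) x ≤ u x := huik.le_transfer hmin hu hcase
    have hsq : ∀ x, (u⁻¹ * k) ((u⁻¹ * k) x) ≤ k x := by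
      intro x
      have h1 : (u⁻¹ * k) ((u⁻¹ * k) x) ≤ u ((u⁻¹ * k) x) := hv1 _
      have h2 : u ((u⁻¹ * k) x) = k x := by
        rw [Equiv.Perm.mul_apply, Equiv.Perm.apply_inv_self]
      exact h1.trans_eq h2
    exact absurd (hsq 0) (not_le.mpr (hbound _ huik huikpos 0))

include hmin hsmall in
/-- Hölder: the centralizer is commutative. -/
theorem cen_comm {c d : Equiv.Perm ℝ} (hc : IsCen ρ c) (hd : IsCen ρ d) :
    c * d = d * c := by
  set k := c * d * c⁻¹ * d⁻¹ with hkdef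
  have hk : IsCen ρ k := ((hc.mul hd).mul hc.inv).mul hd.inv
  rcases hk.trichotomy hmin with H | H | H
  · have hk1 : k = 1 := Equiv.ext fun x => H x
    have h2 : c * d * c⁻¹ * d⁻¹ = 1 := hkdef ▸ hk1
    have h3 : c * d * c⁻¹ = d := mul_inv_eq_one.mp h2
    exact mul_inv_eq_iff_eq_mul.mp h3
  · exact absurd H (no_pos_commutator hmin hc hd hsmall)
  · exfalso
    have hkinv : ∀ x, x < k⁻¹ x := by
      intro x
      have h1 := H (k⁻¹ x)
      rwa [Equiv.Perm.apply_inv_self] at h1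
    have heq : d * c * d⁻¹ * c⁻¹ = k⁻¹ := by rw [hkdef]; group
    refine no_pos_commutator hmin hd hc hsmall ?_
    intro x
    rw [heq]
    exact hkinv x

end holder

/-- Integer "floor exponent" of `c` with respect to `h`, measured at `0`. -/
noncomputable def aF (h c : Equiv.Perm ℝ) : ℤ := sSup {m : ℤ | (h ^ m) 0 ≤ c 0}

/-- Translation number of `c` relative to `h`. -/
noncomputable def tauF (h : Equiv.Perm ℝ) (c : Equiv.Perm ℝ) : ℝ :=
  sInf ((fun n : ℕ => (((aF h (c ^ n) : ℤ) : ℝ) + 1) / n) '' Set.Ici 1)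

theorem pow_le_pointwise {c d : Equiv.Perm ℝ} (hc : IsCen ρ c) (hd : IsCen ρ d)
    (hcd : ∀ x, c x ≤ d x) : ∀ (n : ℕ) (x : ℝ), (c ^ n) x ≤ (d ^ n) x := by
  intro n
  induction n with
  | zero => simp
  | succ n ih =>
    intro x
    have h1 : (c ^ (n + 1)) x = c ((c ^ n) x) := by rw [pow_succ']; rfl
    have h2 : (d ^ (n + 1)) x = d ((d ^ n) x) := by rw [pow_succ']; rfl
    rw [h1, h2]
    exact (hc.1.monotone (ih x)).trans (hcd _)

section tau

variable (hmin : ∀ x : ℝ, Dense {y : ℝ | ∃ γ : G, ρ γ x = y})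
variable {h : Equiv.Perm ℝ} (hh : IsCen ρ h) (hhpos : ∀ x, x < h x)

include hmin hh hhpos

theorem a_isGreatest {c : Equiv.Perm ℝ} (hc : IsCen ρ c) :
    IsGreatest {m : ℤ | (h ^ m) 0 ≤ c 0} (aF h c) := by
  obtain ⟨m, hm1, hm2⟩ := exists_div hh hhpos hmin hc
  have hg : IsGreatest {m : ℤ | (h ^ m) 0 ≤ c 0} m := by
    constructor
    · exact hm1 0
    · intro k hk
      by_contra hcon
      push_neg at hcon
      have h1 : (h ^ (m + 1)) 0 ≤ (h ^ k) 0 := perm_zpow_mono_exp hh hhpos (by omega) 0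
      exact absurd (h1.trans hk) (not_le.mpr (hm2 0))
  have : aF h c = m := hg.csSup_eq
  rw [this]
  exact hg

theorem a_le {c : Equiv.Perm ℝ} (hc : IsCen ρ c) : ∀ x, (h ^ aF h c) x ≤ c x :=
  (hh.zpow _).le_transfer hmin hc (a_isGreatest hmin hh hhpos hc).1

theorem a_lt {c : Equiv.Perm ℝ} (hc : IsCen ρ c) : ∀ x, c x < (h ^ (aF h c + 1)) x := by
  have hnot : ¬ (h ^ (aF h c + 1)) 0 ≤ c 0 := by
    intro hmem
    have := (a_isGreatest hmin hh hhpos hc).2 hmem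
    omega
  exact hc.lt_transfer hmin (hh.zpow _) (not_le.mp hnot)

theorem a_mul_ge {c d : Equiv.Perm ℝ} (hc : IsCen ρ c) (hd : IsCen ρ d) :
    aF h c + aF h d ≤ aF h (c * d) := by
  apply (a_isGreatest hmin hh hhpos (hc.mul hd)).2
  show (h ^ (aF h c + aF h d)) 0 ≤ (c * d) 0
  have h1 : (h ^ (aF h c + aF h d)) 0 = (h ^ aF h c) ((h ^ aF h d) 0) := by
    rw [← Equiv.Perm.mul_apply, ← zpow_add]
  rw [h1, Equiv.Perm.mul_apply]
  exact ((hh.zpow _).1.monotone (a_le hmin hh hhpos hd 0)).trans (a_le hmin hh hhpos hc (d 0))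

theorem a_mul_le {c d : Equiv.Perm ℝ} (hc : IsCen ρ c) (hd : IsCen ρ d) :
    aF h (c * d) ≤ aF h c + aF h d + 1 := by
  have hup : (c * d) 0 < (h ^ (aF h c + aF h d + 2)) 0 := by
    have h1 : (h ^ (aF h c + aF h d + 2)) 0 = (h ^ (aF h c + 1)) ((h ^ (aF h d + 1)) 0) := by
      rw [← Equiv.Perm.mul_apply, ← zpow_add]
      congr 2
      ring
    rw [h1, Equiv.Perm.mul_apply]
    exact ((hh.zpow _).1.monotone (a_lt hmin hh hhpos hd 0).le).trans_lt' (a_lt hmin hh hhpos hc (d 0))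
  by_contra hcon
  push_neg at hcon
  have h2 : (h ^ (aF h c + aF h d + 2)) 0 ≤ (h ^ aF h (c * d)) 0 :=
    perm_zpow_mono_exp hh hhpos (by omega) 0
  exact absurd ((h2.trans (a_le hmin hh hhpos (hc.mul hd) 0)).trans_lt hup)
    (lt_irrefl _)

theorem a_one : aF h (1 : Equiv.Perm ℝ) = 0 := by
  have hg : IsGreatest {m : ℤ | (h ^ m) 0 ≤ (1 : Equiv.Perm ℝ) 0} 0 := by
    constructor
    · show (h ^ (0 : ℤ)) 0 ≤ _
      simp
    · intro k hk
      by_contra hcon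
      push_neg at hcon
      have h1 : (0 : ℝ) < (h ^ k) 0 := by
        have h2 : k = ((k.toNat : ℕ) : ℤ) := by omega
        rw [h2, zpow_natCast]
        exact perm_pow_gt hhpos (by omega) 0
      simp only [Set.mem_setOf_eq, Equiv.Perm.one_apply] at hk
      exact absurd hk (not_le.mpr h1)
  exact hg.csSup_eq

theorem a_zpow_h (m : ℤ) : aF h (h ^ m) = m := by
  have hg : IsGreatest {k : ℤ | (h ^ k) 0 ≤ (h ^ m) 0} m := by
    constructor
    · show (h ^ m) 0 ≤ (h ^ m) 0
      exact le_rfl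
    · intro k hk
      by_contra hcon
      push_neg at hcon
      exact absurd hk (not_le.mpr (perm_zpow_strict_exp hh hhpos hcon 0))
  exact hg.csSup_eq

theorem a_mono {c d : Equiv.Perm ℝ} (hc : IsCen ρ c) (hd : IsCen ρ d)
    (hcd : c 0 ≤ d 0) : aF h c ≤ aF h d :=
  (a_isGreatest hmin hh hhpos hd).2 ((a_isGreatest hmin hh hhpos hc).1.trans hcd)

theorem a_pow_ge {c : Equiv.Perm ℝ} (hc : IsCen ρ c) (n : ℕ) :
    (n : ℤ) * aF h c ≤ aF h (c ^ n) := by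
  induction n with
  | zero => simp [a_one hmin hh hhpos]
  | succ n ih =>
    have h1 := a_mul_ge hmin hh hhpos (hc.pow n) hc
    rw [← pow_succ] at h1
    push_cast
    linarith

theorem tau_tendsto {c : Equiv.Perm ℝ} (hc : IsCen ρ c) :
    Filter.Tendsto (fun n : ℕ => (((aF h (c ^ n) : ℤ) : ℝ) + 1) / n)
      Filter.atTop (𝓝 (tauF h c)) := by
  set u : ℕ → ℝ := fun n => ((aF h (c ^ n) : ℤ) : ℝ) + 1 with hu
  have hsub : Subadditive u := by
    intro m n
    have h1 := a_mul_le hmin hh hhpos (hc.pow m) (hc.pow n)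
    rw [← pow_add] at h1
    simp only [hu]
    push_cast
    have h2 : ((aF h (c ^ (m + n)) : ℤ) : ℝ) ≤ ((aF h (c ^ m) + aF h (c ^ n) + 1 : ℤ) : ℝ) :=
      Int.cast_le.mpr h1
    push_cast at h2
    linarith
  have hbdd : BddBelow (Set.range fun n : ℕ => u n / n) := by
    refine ⟨min ((aF h c : ℤ) : ℝ) 0, ?_⟩
    rintro _ ⟨n, rfl⟩
    rcases Nat.eq_zero_or_pos n with hn | hn
    · subst hn
      simp only [Nat.cast_zero, div_zero]
      exact min_le_right _ _
    · have h1 := a_pow_ge hmin hh hhpos hc n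
      have h2 : ((aF h c : ℤ) : ℝ) ≤ u n / n := by
        rw [le_div_iff₀ (by positivity : (0:ℝ) < (n:ℝ))]
        have h3 : (((n : ℤ) * aF h c : ℤ) : ℝ) ≤ ((aF h (c ^ n) : ℤ) : ℝ) := Int.cast_le.mpr h1
        simp only [hu]
        push_cast at h3 ⊢
        nlinarith
      exact (min_le_left _ _).trans h2
  have hlim : hsub.lim = tauF h c := by rw [Subadditive.lim]; rfl
  exact hlim ▸ hsub.tendsto_lim hbdd

theorem tau_one : tauF h (1 : Equiv.Perm ℝ) = 0 := by
  have h1 := tau_tendsto hmin hh hhpos (IsCen.one (ρ := ρ))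
  have h2 : Filter.Tendsto (fun n : ℕ => (((aF h ((1 : Equiv.Perm ℝ) ^ n) : ℤ) : ℝ) + 1) / n)
      Filter.atTop (𝓝 0) := by
    have h3 : (fun n : ℕ => (((aF h ((1 : Equiv.Perm ℝ) ^ n) : ℤ) : ℝ) + 1) / n)
        = fun n : ℕ => 1 / (n : ℝ) := by
      funext n
      rw [one_pow, a_one hmin hh hhpos]
      norm_num
    rw [h3]
    exact tendsto_one_div_atTop_nhds_zero_nat
  exact tendsto_nhds_unique h1 h2

theorem tau_h : tauF h h = 1 := by
  have h1 := tau_tendsto hmin hh hhpos hh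
  have h2 : Filter.Tendsto (fun n : ℕ => (((aF h (h ^ n) : ℤ) : ℝ) + 1) / n)
      Filter.atTop (𝓝 1) := by
    have h3 : ∀ n : ℕ, (((aF h (h ^ n) : ℤ) : ℝ) + 1) / n = ((n : ℝ) + 1) / n := by
      intro n
      rw [← zpow_natCast h n, a_zpow_h hmin hh hhpos]
      norm_num
    simp only [h3]
    have h4 : Filter.Tendsto (fun n : ℕ => 1 + 1 / (n : ℝ)) Filter.atTop (𝓝 (1 + 0)) :=
      tendsto_const_nhds.add tendsto_one_div_atTop_nhds_zero_nat
    rw [add_zero] at h4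
    refine h4.congr' ?_
    filter_upwards [Filter.eventually_gt_atTop 0] with n hn
    field_simp
  exact tendsto_nhds_unique h1 h2

theorem tau_mono {c d : Equiv.Perm ℝ} (hc : IsCen ρ c) (hd : IsCen ρ d)
    (hcd : c 0 ≤ d 0) : tauF h c ≤ tauF h d := by
  have hpt := hc.le_transfer hmin hd hcd
  refine le_of_tendsto_of_tendsto' (tau_tendsto hmin hh hhpos hc)
    (tau_tendsto hmin hh hhpos hd) fun n => ?_
  have h1 : aF h (c ^ n) ≤ aF h (d ^ n) :=
    a_mono hmin hh hhpos (hc.pow n) (hd.pow n)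
      (pow_le_pointwise hc hd hpt n 0)
  have h2 : ((aF h (c ^ n) : ℤ) : ℝ) ≤ ((aF h (d ^ n) : ℤ) : ℝ) := Int.cast_le.mpr h1
  exact div_le_div_of_nonneg_right (by linarith) (Nat.cast_nonneg n)

end tau

section tauadd

variable (hmin : ∀ x : ℝ, Dense {y : ℝ | ∃ γ : G, ρ γ x = y})
variable (hsmall : ∀ c : Equiv.Perm ℝ, IsCen ρ c → (∀ x, x < c x) →
    ∃ u : Equiv.Perm ℝ, IsCen ρ u ∧ (∀ x, x < u x) ∧ (∀ x, u x < c x))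
variable {h : Equiv.Perm ℝ} (hh : IsCen ρ h) (hhpos : ∀ x, x < h x)

include hmin hsmall hh hhpos

theorem tau_add {c d : Equiv.Perm ℝ} (hc : IsCen ρ c) (hd : IsCen ρ d) :
    tauF h (c * d) = tauF h c + tauF h d := by
  have hcomm : Commute c d := cen_comm hmin hsmall hc hd
  have hsum : Filter.Tendsto
      (fun n : ℕ => (((aF h (c ^ n) : ℤ) : ℝ) + 1) / n + (((aF h (d ^ n) : ℤ) : ℝ) + 1) / n)
      Filter.atTop (𝓝 (tauF h c + tauF h d)) :=
    (tau_tendsto hmin hh hhpos hc).add (tau_tendsto hmin hh hhpos hd)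
  have hone : Filter.Tendsto (fun n : ℕ => 1 / (n : ℝ)) Filter.atTop (𝓝 0) :=
    tendsto_one_div_atTop_nhds_zero_nat
  have hlow : Filter.Tendsto
      (fun n : ℕ => (((aF h (c ^ n) : ℤ) : ℝ) + 1) / n + (((aF h (d ^ n) : ℤ) : ℝ) + 1) / n
        - 1 / n) Filter.atTop (𝓝 (tauF h c + tauF h d)) := by
    have := hsum.sub hone
    rwa [sub_zero] at this
  refine tendsto_nhds_unique (tau_tendsto hmin hh hhpos (hc.mul hd)) ?_
  refine tendsto_of_tendsto_of_tendsto_of_le_of_le hlow hsum ?_ ?_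
  · intro n
    have hpow : (c * d) ^ n = c ^ n * d ^ n := hcomm.mul_pow n
    have h1 : aF h (c ^ n) + aF h (d ^ n) ≤ aF h ((c * d) ^ n) := by
      rw [hpow]
      exact a_mul_ge hmin hh hhpos (hc.pow n) (hd.pow n)
    have h2 : ((aF h (c ^ n) + aF h (d ^ n) : ℤ) : ℝ) ≤ ((aF h ((c * d) ^ n) : ℤ) : ℝ) :=
      Int.cast_le.mpr h1
    push_cast at h2
    dsimp only
    have e : (((aF h (c ^ n) : ℤ) : ℝ) + 1) / (n : ℝ) + (((aF h (d ^ n) : ℤ) : ℝ) + 1) / (n : ℝ)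
        - 1 / (n : ℝ)
        = (((aF h (c ^ n) : ℤ) : ℝ) + ((aF h (d ^ n) : ℤ) : ℝ) + 1) / (n : ℝ) := by
      rw [← add_div, div_sub_div_same]
      congr 1
      ring
    rw [e]
    exact div_le_div_of_nonneg_right (by linarith) (Nat.cast_nonneg n)
  · intro n
    have hpow : (c * d) ^ n = c ^ n * d ^ n := hcomm.mul_pow n
    have h1 : aF h ((c * d) ^ n) ≤ aF h (c ^ n) + aF h (d ^ n) + 1 := by
      rw [hpow]
      exact a_mul_le hmin hh hhpos (hc.pow n) (hd.pow n)
    have h2 : ((aF h ((c * d) ^ n) : ℤ) : ℝ) ≤ ((aF h (c ^ n) + aF h (d ^ n) + 1 : ℤ) : ℝ) :=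
      Int.cast_le.mpr h1
    push_cast at h2
    dsimp only
    have e : (((aF h (c ^ n) : ℤ) : ℝ) + 1) / (n : ℝ) + (((aF h (d ^ n) : ℤ) : ℝ) + 1) / (n : ℝ)
        = (((aF h (c ^ n) : ℤ) : ℝ) + ((aF h (d ^ n) : ℤ) : ℝ) + 2) / (n : ℝ) := by
      rw [← add_div]
      congr 1
      ring
    rw [e]
    exact div_le_div_of_nonneg_right (by linarith) (Nat.cast_nonneg n)

theorem tau_inv {c : Equiv.Perm ℝ} (hc : IsCen ρ c) : tauF h c⁻¹ = - tauF h c := by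
  have h1 := tau_add hmin hsmall hh hhpos hc hc.inv
  rw [mul_inv_cancel, tau_one hmin hh hhpos] at h1
  linarith

theorem tau_pow {c : Equiv.Perm ℝ} (hc : IsCen ρ c) (n : ℕ) :
    tauF h (c ^ n) = n * tauF h c := by
  induction n with
  | zero => simpa using tau_one hmin hh hhpos
  | succ n ih =>
    rw [pow_succ, tau_add hmin hsmall hh hhpos (hc.pow n) hc, ih]
    push_cast
    ring

theorem tau_pos {c : Equiv.Perm ℝ} (hc : IsCen ρ c) (hcpos : ∀ x, x < c x) :
    0 < tauF h c := by
  obtain ⟨n, hn⟩ := unbounded_orbit hc.1 hcpos 0 (h 0)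
  have hn0 : n ≠ 0 := by
    intro hn0
    subst hn0
    simp only [pow_zero, Equiv.Perm.one_apply] at hn
    exact absurd hn (not_lt.mpr (hhpos 0).le)
  have h1 : tauF h h ≤ tauF h (c ^ n) :=
    tau_mono hmin hh hhpos hh (hc.pow n) hn.le
  rw [tau_h hmin hh hhpos, tau_pow hmin hsmall hh hhpos hc n] at h1
  by_contra hcon
  push_neg at hcon
  have : (n : ℝ) * tauF h c ≤ 0 := mul_nonpos_of_nonneg_of_nonpos (by positivity) hcon
  linarith

theorem tau_strictMono {c d : Equiv.Perm ℝ} (hc : IsCen ρ c) (hd : IsCen ρ d)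
    (hcd : c 0 < d 0) : tauF h c < tauF h d := by
  have hpt := hc.lt_transfer hmin hd hcd
  have he : IsCen ρ (c⁻¹ * d) := hc.inv.mul hd
  have hepos : ∀ x, x < (c⁻¹ * d) x := by
    intro x
    rw [Equiv.Perm.mul_apply]
    have h2 := strictMono_perm_inv hc.1 (hpt x)
    rwa [Equiv.Perm.inv_apply_self] at h2
  have h1 : tauF h d = tauF h c + tauF h (c⁻¹ * d) := by
    rw [← tau_add hmin hsmall hh hhpos hc he, mul_inv_cancel_left]
  rw [h1]
  linarith [tau_pos hmin hsmall hh hhpos he hepos]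

theorem tau_zpow_h (m : ℤ) : tauF h (h ^ m) = m := by
  rcases le_or_gt 0 m with hm | hm
  · lift m to ℕ using hm
    rw [zpow_natCast, tau_pow hmin hsmall hh hhpos hh, tau_h hmin hh hhpos, mul_one]
    norm_num
  · obtain ⟨n, hn⟩ : ∃ n : ℕ, -m = (n : ℤ) := ⟨(-m).toNat, by omega⟩
    have h1 : h ^ m = (h ^ (n : ℕ))⁻¹ := by
      rw [← zpow_natCast, ← hn, ← zpow_neg, neg_neg]
    rw [h1, tau_inv hmin hsmall hh hhpos (hh.pow n),
      tau_pow hmin hsmall hh hhpos hh, tau_h hmin hh hhpos, mul_one]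
    have h3 : ((n : ℕ) : ℝ) = -(m : ℝ) := by exact_mod_cast congrArg (Int.cast : ℤ → ℝ) hn.symm
    rw [h3, neg_neg]

theorem tau_dense {s t : ℝ} (hst : s < t) :
    ∃ c : Equiv.Perm ℝ, IsCen ρ c ∧ s < tauF h c ∧ tauF h c < t := by
  classical
  set T : AddSubgroup ℝ :=
    { carrier := {t : ℝ | ∃ c : Equiv.Perm ℝ, IsCen ρ c ∧ tauF h c = t}
      zero_mem' := ⟨1, IsCen.one, tau_one hmin hh hhpos⟩
      add_mem' := by
        rintro a b ⟨c, hc, rfl⟩ ⟨d, hd, rfl⟩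
        exact ⟨c * d, hc.mul hd, tau_add hmin hsmall hh hhpos hc hd⟩
      neg_mem' := by
        rintro a ⟨c, hc, rfl⟩
        exact ⟨c⁻¹, hc.inv, tau_inv hmin hsmall hh hhpos hc⟩ } with hT
  have hdense : Dense (T : Set ℝ) := by
    apply AddSubgroup.dense_of_not_isolated_zero
    intro ε hε
    by_contra hno
    push_neg at hno
    set P := {t : ℝ | (∃ c : Equiv.Perm ℝ, IsCen ρ c ∧ tauF h c = t) ∧ 0 < t} with hP
    have hPne : P.Nonempty := ⟨1, ⟨h, hh, tau_h hmin hh hhpos⟩, one_pos⟩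
    have hPbdd : BddBelow P := ⟨0, fun x hx => hx.2.le⟩
    set δ := sInf P with hδ
    have hεδ : ε ≤ δ := by
      apply le_csInf hPne
      intro b hb
      by_contra hcon
      push_neg at hcon
      exact hno b hb.1 (Set.mem_Ioo.mpr ⟨hb.2, hcon⟩)
    have hδpos : 0 < δ := lt_of_lt_of_le hε hεδ
    by_cases hatt : δ ∈ P
    · obtain ⟨⟨c₀, hc₀, hτ⟩, _⟩ := hatt
      have hc₀pos : ∀ x, x < c₀ x := by
        rcases hc₀.trichotomy hmin with H | H | H
        · exfalso
          have hc1 : c₀ = 1 := Equiv.ext fun x => H x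
          rw [hc1, tau_one hmin hh hhpos] at hτ
          linarith
        · exact H
        · exfalso
          have : tauF h c₀ < tauF h 1 :=
            tau_strictMono hmin hsmall hh hhpos hc₀ IsCen.one (H 0)
          rw [tau_one hmin hh hhpos] at this
          linarith
      obtain ⟨u, hu, hupos, huc⟩ := hsmall c₀ hc₀ hc₀pos
      have h1 : tauF h u ∈ P := ⟨⟨u, hu, rfl⟩, tau_pos hmin hsmall hh hhpos hu hupos⟩
      have h2 : tauF h u < δ := by
        rw [← hτ]
        exact tau_strictMono hmin hsmall hh hhpos hu hc₀ (huc 0)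
      exact absurd (csInf_le hPbdd h1) (not_le.mpr h2)
    · obtain ⟨t₁, ht₁P, ht₁⟩ := exists_lt_of_csInf_lt hPne (by linarith : sInf P < δ + δ)
      have ht₁δ : δ < t₁ := lt_of_le_of_ne (csInf_le hPbdd ht₁P) fun e => hatt (e ▸ ht₁P)
      obtain ⟨t₂, ht₂P, ht₂⟩ := exists_lt_of_csInf_lt hPne ht₁δ
      have ht₂δ : δ ≤ t₂ := csInf_le hPbdd ht₂P
      have hg : t₁ - t₂ ∈ P := by
        constructor
        · obtain ⟨c₁, hc₁, he₁⟩ := ht₁P.1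
          obtain ⟨c₂, hc₂, he₂⟩ := ht₂P.1
          exact ⟨c₁ * c₂⁻¹, hc₁.mul hc₂.inv, by
            rw [tau_add hmin hsmall hh hhpos hc₁ hc₂.inv,
              tau_inv hmin hsmall hh hhpos hc₂, he₁, he₂]
            ring⟩
        · linarith
      have : δ ≤ t₁ - t₂ := csInf_le hPbdd hg
      linarith
  rw [dense_iff_exists_between] at hdense
  obtain ⟨g, hgT, hg1, hg2⟩ := hdense s t hst
  obtain ⟨c, hc, rfl⟩ := hgT
  exact ⟨c, hc, hg1, hg2⟩

end tauadd

/-- The conjugating map: `φ x` is the supremum of translation numbers of centralizer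
elements moving `0` to the left of `x`. -/
noncomputable def phiF (ρ : G → ℝ ≃ₜ ℝ) (h : Equiv.Perm ℝ) (x : ℝ) : ℝ :=
  sSup {t : ℝ | ∃ c : Equiv.Perm ℝ, IsCen ρ c ∧ c 0 ≤ x ∧ tauF h c = t}

section phi

variable (hmin : ∀ x : ℝ, Dense {y : ℝ | ∃ γ : G, ρ γ x = y})
variable (hsmall : ∀ c : Equiv.Perm ℝ, IsCen ρ c → (∀ x, x < c x) →
    ∃ u : Equiv.Perm ℝ, IsCen ρ u ∧ (∀ x, x < u x) ∧ (∀ x, u x < c x))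
variable {h : Equiv.Perm ℝ} (hh : IsCen ρ h) (hhpos : ∀ x, x < h x)

include hmin hh hhpos

theorem phi_nonempty (x : ℝ) :
    {t : ℝ | ∃ c : Equiv.Perm ℝ, IsCen ρ c ∧ c 0 ≤ x ∧ tauF h c = t}.Nonempty := by
  obtain ⟨n, hn⟩ := unbounded_orbit hh.1 hhpos x 0
  refine ⟨tauF h (h ^ (-(n : ℤ))), h ^ (-(n : ℤ)), hh.zpow _, ?_, rfl⟩
  have h2 : (h ^ (-(n : ℤ))) 0 ≤ (h ^ (-(n : ℤ))) ((h ^ (n : ℤ)) x) :=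
    ((hh.zpow _).1).monotone (by rw [zpow_natCast]; exact hn.le)
  rwa [perm_zpow_cancel hh hhpos] at h2

theorem rho_strictMono (γ : G) : StrictMono ⇑(ρ γ) := by
  rcases Continuous.strictMono_of_inj (ρ γ).continuous (ρ γ).injective with H | H
  · exact H
  · exfalso
    have h1 : (ρ γ) (h 0) < (ρ γ) 0 := H (hhpos 0)
    rw [← hh.2 γ 0] at h1
    exact absurd h1 (not_lt.mpr (hhpos _).le)

include hsmall

theorem phi_bddAbove (x : ℝ) :
    BddAbove {t : ℝ | ∃ c : Equiv.Perm ℝ, IsCen ρ c ∧ c 0 ≤ x ∧ tauF h c = t} := by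
  obtain ⟨n, hn⟩ := unbounded_orbit hh.1 hhpos 0 x
  refine ⟨((n : ℤ) : ℝ), ?_⟩
  rintro _ ⟨c, hc, hcx, rfl⟩
  have h1 : c 0 ≤ (h ^ (n : ℤ)) 0 := by
    rw [zpow_natCast]
    exact hcx.trans hn.le
  have := tau_mono hmin hh hhpos hc (hh.zpow _) h1
  rwa [tau_zpow_h hmin hsmall hh hhpos] at this

theorem phi_le {c : Equiv.Perm ℝ} (hc : IsCen ρ c) {x : ℝ} (hcx : c 0 ≤ x) :
    tauF h c ≤ phiF ρ h x :=
  le_csSup (phi_bddAbove hmin hsmall hh hhpos x) ⟨c, hc, hcx, rfl⟩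

theorem le_phi {c : Equiv.Perm ℝ} (hc : IsCen ρ c) {x : ℝ} (hxc : x ≤ c 0) :
    phiF ρ h x ≤ tauF h c := by
  refine csSup_le (phi_nonempty hmin hh hhpos x) ?_
  rintro _ ⟨d, hd, hdx, rfl⟩
  exact tau_mono hmin hh hhpos hd hc (hdx.trans hxc)

theorem phi_mono : Monotone (phiF ρ h) := by
  intro x y hxy
  refine csSup_le_csSup (phi_bddAbove hmin hsmall hh hhpos y)
    (phi_nonempty hmin hh hhpos x) ?_
  rintro _ ⟨c, hc, hcx, rfl⟩
  exact ⟨c, hc, hcx.trans hxy, rfl⟩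

theorem phi_zero : phiF ρ h 0 = 0 := by
  apply le_antisymm
  · have h1 := le_phi hmin hsmall hh hhpos (IsCen.one (ρ := ρ)) (x := 0)
    rw [tau_one hmin hh hhpos] at h1
    exact h1 le_rfl
  · have h1 := phi_le hmin hsmall hh hhpos (IsCen.one (ρ := ρ)) (x := 0)
    rw [tau_one hmin hh hhpos] at h1
    exact h1 le_rfl

theorem phi_equiv {c : Equiv.Perm ℝ} (hc : IsCen ρ c) (y : ℝ) :
    phiF ρ h (c y) = phiF ρ h y + tauF h c := by
  apply le_antisymm
  · refine csSup_le (phi_nonempty hmin hh hhpos (c y)) ?_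
    rintro _ ⟨c', hc', hcx, rfl⟩
    have hd : IsCen ρ (c⁻¹ * c') := hc.inv.mul hc'
    have hd0 : (c⁻¹ * c') 0 ≤ y := by
      rw [Equiv.Perm.mul_apply]
      have h1 := (strictMono_perm_inv hc.1).monotone hcx
      rwa [Equiv.Perm.inv_apply_self] at h1
    have h2 : tauF h c' = tauF h c + tauF h (c⁻¹ * c') := by
      rw [← tau_add hmin hsmall hh hhpos hc hd, mul_inv_cancel_left]
    rw [h2]
    have h3 := phi_le hmin hsmall hh hhpos hd hd0
    linarith
  · have key : ∀ t ∈ {t : ℝ | ∃ d : Equiv.Perm ℝ, IsCen ρ d ∧ d 0 ≤ y ∧ tauF h d = t},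
        t ≤ phiF ρ h (c y) - tauF h c := by
      rintro _ ⟨d, hd, hd0, rfl⟩
      have h1 : (c * d) 0 ≤ c y := by
        rw [Equiv.Perm.mul_apply]
        exact hc.1.monotone hd0
      have h2 := phi_le hmin hsmall hh hhpos (hc.mul hd) h1
      rw [tau_add hmin hsmall hh hhpos hc hd] at h2
      linarith
    have h4 : phiF ρ h y ≤ phiF ρ h (c y) - tauF h c :=
      csSup_le (phi_nonempty hmin hh hhpos y) key
    linarith

/-- Any monotone equivariant map agrees with `φ` up to a constant. -/
theorem phi_F_eq {F : ℝ → ℝ} (hF : Monotone F)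
    (hFe : ∀ c : Equiv.Perm ℝ, IsCen ρ c → ∀ y, F (c y) = F y + tauF h c) (x : ℝ) :
    F x = F 0 + phiF ρ h x := by
  have hge : phiF ρ h x ≤ F x - F 0 := by
    refine csSup_le (phi_nonempty hmin hh hhpos x) ?_
    rintro _ ⟨c, hc, hcx, rfl⟩
    have h1 : F (c 0) ≤ F x := hF hcx
    rw [hFe c hc 0] at h1
    linarith
  have hle : F x - F 0 ≤ phiF ρ h x := by
    by_contra hcon
    push_neg at hcon
    obtain ⟨c, hc, hc1, hc2⟩ := tau_dense hmin hsmall hh hhpos hcon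
    have hxc : x ≤ c 0 := by
      by_contra hcc
      push_neg at hcc
      exact absurd (phi_le hmin hsmall hh hhpos hc hcc.le) (not_le.mpr hc1)
    have h1 : F x ≤ F (c 0) := hF hxc
    rw [hFe c hc 0] at h1
    linarith
  linarith

theorem phi_rho (γ : G) (x : ℝ) :
    phiF ρ h (ρ γ x) = phiF ρ h x + phiF ρ h (ρ γ 0) := by
  have hF : Monotone fun y => phiF ρ h (ρ γ y) :=
    (phi_mono hmin hsmall hh hhpos).comp (rho_strictMono hmin hh hhpos γ).monotone
  have hFe : ∀ c : Equiv.Perm ℝ, IsCen ρ c → ∀ y,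
      phiF ρ h (ρ γ (c y)) = phiF ρ h (ρ γ y) + tauF h c := by
    intro c hc y
    rw [← hc.2 γ y]
    exact phi_equiv hmin hsmall hh hhpos hc (ρ γ y)
  have := phi_F_eq hmin hsmall hh hhpos hF hFe x
  rw [this]
  ring

variable (hρ : ∀ γ γ' : G, ∀ x : ℝ, ρ (γ * γ') x = ρ γ (ρ γ' x))

include hρ

theorem phi_strictMono : StrictMono (phiF ρ h) := by
  have hone : ∀ w : ℝ, ρ (1 : G) w = w := by
    intro w
    have h1 := hρ 1 1 w
    rw [one_mul] at h1
    exact (ρ (1 : G)).injective h1.symm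
  intro x y hxy
  rcases ((phi_mono hmin hsmall hh hhpos) hxy.le).lt_or_eq with H | H
  · exact H
  · exfalso
    -- the set of points near which φ is locally constant
    set P := {z : ℝ | ∃ a b : ℝ, a < z ∧ z < b ∧
      ∀ u, a < u → u < b → phiF ρ h u = phiF ρ h z} with hP
    have hPopen : IsOpen P := by
      rw [isOpen_iff_forall_mem_open]
      rintro z ⟨a, b, haz, hzb, hconst⟩
      refine ⟨Ioo a b, ?_, isOpen_Ioo, haz, hzb⟩
      rintro z' ⟨h1, h2⟩
      exact ⟨a, b, h1, h2, fun u hu1 hu2 =>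
        (hconst u hu1 hu2).trans (hconst z' h1 h2).symm⟩
    have hPinv : ∀ (γ : G) (z : ℝ), z ∈ P → ρ γ z ∈ P := by
      rintro γ z ⟨a, b, haz, hzb, hconst⟩
      refine ⟨ρ γ a, ρ γ b, rho_strictMono hmin hh hhpos γ haz,
        rho_strictMono hmin hh hhpos γ hzb, ?_⟩
      intro u hu1 hu2
      set w := (ρ γ).symm u with hw
      have hwu : ρ γ w = u := (ρ γ).apply_symm_apply u
      have haw : a < w := by
        have := (rho_strictMono hmin hh hhpos γ).lt_iff_lt (a := a) (b := w)
        rw [hwu] at this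
        exact this.mp hu1
      have hwb : w < b := by
        have := (rho_strictMono hmin hh hhpos γ).lt_iff_lt (a := w) (b := b)
        rw [hwu] at this
        exact this.mp hu2
      rw [← hwu, phi_rho hmin hsmall hh hhpos γ w, phi_rho hmin hsmall hh hhpos γ z,
        hconst w haw hwb]
    have hmid : (x + y) / 2 ∈ P := by
      refine ⟨x, y, by linarith, by linarith, ?_⟩
      intro u hu1 hu2
      have h1 : phiF ρ h u ≤ phiF ρ h y := (phi_mono hmin hsmall hh hhpos) hu2.le
      have h2 : phiF ρ h x ≤ phiF ρ h u := (phi_mono hmin hsmall hh hhpos) hu1.le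
      have h3 : phiF ρ h x ≤ phiF ρ h ((x+y)/2) :=
        (phi_mono hmin hsmall hh hhpos) (by linarith)
      have h4 : phiF ρ h ((x+y)/2) ≤ phiF ρ h y :=
        (phi_mono hmin hsmall hh hhpos) (by linarith)
      rw [← H] at h1 h4
      linarith
    have hPuniv : ∀ w : ℝ, w ∈ P := by
      by_contra hcon
      push_neg at hcon
      obtain ⟨w, hw⟩ := hcon
      have horb : {v : ℝ | ∃ γ : G, ρ γ w = v} ⊆ Pᶜ := by
        rintro _ ⟨γ, rfl⟩
        intro hmem
        apply hw
        have h1 : ρ γ⁻¹ (ρ γ w) = w := by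
          rw [← hρ, inv_mul_cancel]
          exact hone w
        have := hPinv γ⁻¹ _ hmem
        rwa [h1] at this
      have h2 := closure_minimal horb hPopen.isClosed_compl
      rw [(hmin w).closure_eq] at h2
      exact (h2 (mem_univ ((x + y) / 2))) hmid
    have hlc : IsLocallyConstant (phiF ρ h) := by
      rw [IsLocallyConstant.iff_exists_open]
      intro z
      obtain ⟨a, b, h1, h2, h3⟩ := hPuniv z
      exact ⟨Ioo a b, isOpen_Ioo, ⟨h1, h2⟩, fun u hu => h3 u hu.1 hu.2⟩
    have hcst := hlc.apply_eq_of_preconnectedSpace (h 0) 0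
    have h5 : phiF ρ h (h 0) = phiF ρ h 0 + 1 := by
      have := phi_equiv hmin hsmall hh hhpos hh 0
      rwa [tau_h hmin hh hhpos] at this
    rw [hcst] at h5
    linarith

omit hρ

theorem phi_surj : Function.Surjective (phiF ρ h) := by
  intro t
  set X := {z : ℝ | ∃ c : Equiv.Perm ℝ, IsCen ρ c ∧ tauF h c ≤ t ∧ z = c 0} with hX
  have hXne : X.Nonempty := by
    obtain ⟨m, hm⟩ := exists_int_lt t
    exact ⟨(h ^ m) 0, h ^ m, hh.zpow m, by
      rw [tau_zpow_h hmin hsmall hh hhpos]; exact hm.le, rfl⟩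
  have hXbdd : BddAbove X := by
    obtain ⟨m, hm⟩ := exists_int_gt t
    refine ⟨(h ^ m) 0, ?_⟩
    rintro _ ⟨c, hc, hct, rfl⟩
    by_contra hcon
    push_neg at hcon
    have h1 := tau_mono hmin hh hhpos (hh.zpow m) hc hcon.le
    rw [tau_zpow_h hmin hsmall hh hhpos] at h1
    linarith
  set x := sSup X with hx
  refine ⟨x, le_antisymm ?_ ?_⟩
  · refine csSup_le (phi_nonempty hmin hh hhpos x) ?_
    rintro _ ⟨c, hc, hcx, rfl⟩
    by_contra hcon
    push_neg at hcon
    obtain ⟨d, hd, hd1, hd2⟩ := tau_dense hmin hsmall hh hhpos hcon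
    have hub : ∀ z ∈ X, z ≤ d 0 := by
      rintro _ ⟨c', hc', hct, rfl⟩
      by_contra hcc
      push_neg at hcc
      have := tau_mono hmin hh hhpos hd hc' hcc.le
      linarith
    have h1 : x ≤ d 0 := csSup_le hXne hub
    have h2 : d 0 < c 0 := by
      by_contra hcc
      push_neg at hcc
      have := tau_mono hmin hh hhpos hc hd hcc
      linarith
    linarith [hcx.trans h1]
  · by_contra hcon
    push_neg at hcon
    obtain ⟨c, hc, hc1, hc2⟩ := tau_dense hmin hsmall hh hhpos hcon
    have hmem : c 0 ∈ X := ⟨c, hc, hc2.le, rfl⟩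
    have h1 : c 0 ≤ x := le_csSup hXbdd hmem
    exact absurd (phi_le hmin hsmall hh hhpos hc h1) (not_le.mpr hc1)

end phi

theorem homeo_symm_strictMono {f : ℝ ≃ₜ ℝ} (hf : StrictMono ⇑f) : StrictMono ⇑f.symm := by
  intro a b hab
  rw [← hf.lt_iff_lt]
  simpa only [Homeomorph.apply_symm_apply] using hab

end HolderDev

/-- If the set of strictly increasing equivariant homeomorphisms has values at
some point accumulating in `ℝ`, then both actions are simultaneously topologically conjugate
to the same action by translations. -/
theorem actions_conjugate_to_translations_of_accumulation
    {G : Type*} [Group G]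
    (ρ₁ ρ₂ : G → ℝ ≃ₜ ℝ)
    (hρ₁ : ∀ γ γ' : G, ∀ x : ℝ, ρ₁ (γ * γ') x = ρ₁ γ (ρ₁ γ' x))
    (hρ₂ : ∀ γ γ' : G, ∀ x : ℝ, ρ₂ (γ * γ') x = ρ₂ γ (ρ₂ γ' x))
    (hmin : ∀ x : ℝ, Dense {y : ℝ | ∃ γ : G, ρ₁ γ x = y})
    (S : Set (ℝ ≃ₜ ℝ))
    (hS : S = {f : ℝ ≃ₜ ℝ | StrictMono f ∧ ∀ (γ : G) (x : ℝ), f (ρ₁ γ x) = ρ₂ γ (f x)})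
    (hSne : S.Nonempty) (f₀ : ℝ ≃ₜ ℝ) (hf₀ : f₀ ∈ S)
    (x₀ p : ℝ)
    (hacc : ∀ ε : ℝ, 0 < ε → ∃ f ∈ S, f x₀ ≠ p ∧ |f x₀ - p| < ε) :
    ∃ (φ : ℝ ≃ₜ ℝ) (r : G → ℝ),
      (∀ γ γ' : G, r (γ * γ') = r γ + r γ') ∧
      (∀ (γ : G) (x : ℝ), φ (ρ₁ γ x) = φ x + r γ) ∧
      (∀ (γ : G) (y : ℝ), φ (f₀.symm (ρ₂ γ y)) = φ (f₀.symm y) + r γ) := by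
  classical
  subst hS
  obtain ⟨hf₀m, hf₀e⟩ := hf₀
  -- inverse equivariance of f₀
  have hf₀s : ∀ (γ : G) (y : ℝ), f₀.symm (ρ₂ γ y) = ρ₁ γ (f₀.symm y) := by
    intro γ y
    have h1 := hf₀e γ (f₀.symm y)
    rw [Homeomorph.apply_symm_apply] at h1
    have h2 := congrArg f₀.symm h1
    rw [Homeomorph.symm_apply_apply] at h2
    exact h2.symm
  -- centralizer elements from S
  set cOf : (ℝ ≃ₜ ℝ) → Equiv.Perm ℝ := fun f => (f.trans f₀.symm).toEquiv with hcOf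
  have hcOfApp : ∀ (f : ℝ ≃ₜ ℝ) (x : ℝ), cOf f x = f₀.symm (f x) := fun f x => rfl
  have hcOfCen : ∀ f : ℝ ≃ₜ ℝ, f ∈ {f : ℝ ≃ₜ ℝ | StrictMono f ∧
      ∀ (γ : G) (x : ℝ), f (ρ₁ γ x) = ρ₂ γ (f x)} → IsCen ρ₁ (cOf f) := by
    rintro f ⟨hfm, hfe⟩
    constructor
    · intro a b hab
      rw [hcOfApp, hcOfApp]
      exact homeo_symm_strictMono hf₀m (hfm hab)
    · intro γ x
      rw [hcOfApp, hcOfApp, hfe, hf₀s]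
  -- a nontrivial centralizer element
  obtain ⟨f₁, hf₁S, hf₁ne, _⟩ := hacc 1 one_pos
  obtain ⟨f₂, hf₂S, hf₂ne, hf₂lt⟩ := hacc (|f₁ x₀ - p|)
    (abs_pos.mpr (sub_ne_zero.mpr hf₁ne))
  have hf₁₂ : f₂ x₀ ≠ f₁ x₀ := by
    intro heq
    rw [heq] at hf₂lt
    exact lt_irrefl _ hf₂lt
  set c₁ := cOf f₁ with hc₁def
  set c₂ := cOf f₂ with hc₂def
  have hc₁ : IsCen ρ₁ c₁ := hcOfCen f₁ hf₁S
  have hc₂ : IsCen ρ₁ c₂ := hcOfCen f₂ hf₂S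
  set c₀ := c₁⁻¹ * c₂ with hc₀def
  have hc₀ : IsCen ρ₁ c₀ := hc₁.inv.mul hc₂
  have hc₀ne : c₀ x₀ ≠ x₀ := by
    intro heq
    rw [hc₀def, Equiv.Perm.mul_apply] at heq
    have h1 := congrArg c₁ heq
    rw [Equiv.Perm.apply_inv_self] at h1
    rw [hc₁def, hc₂def, hcOfApp, hcOfApp] at h1
    exact hf₁₂ (f₀.symm.injective h1)
  -- an everywhere-positive centralizer element h
  obtain ⟨h, hh, hhpos⟩ : ∃ h : Equiv.Perm ℝ, IsCen ρ₁ h ∧ ∀ x, x < h x := by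
    rcases hc₀.trichotomy hmin with H | H | H
    · exact absurd (H x₀) hc₀ne
    · exact ⟨c₀, hc₀, H⟩
    · refine ⟨c₀⁻¹, hc₀.inv, fun x => ?_⟩
      have h1 := H (c₀⁻¹ x)
      rwa [Equiv.Perm.apply_inv_self] at h1
  -- no smallest positive element
  have hsmall : ∀ c : Equiv.Perm ℝ, IsCen ρ₁ c → (∀ x, x < c x) →
      ∃ u : Equiv.Perm ℝ, IsCen ρ₁ u ∧ (∀ x, x < u x) ∧ (∀ x, u x < c x) := by
    intro c hc hcpos
    by_contra hcon
    push_neg at hcon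
    -- c is a least positive element; every centralizer element is a power of c
    have hleast : ∀ u : Equiv.Perm ℝ, IsCen ρ₁ u → (∀ x, x < u x) → ∃ x, c x ≤ u x := hcon
    have hall : ∀ d : Equiv.Perm ℝ, IsCen ρ₁ d → ∃ m : ℤ, ∀ x, d x = (c ^ m) x := by
      intro d hd
      obtain ⟨m, hm1, hm2⟩ := exists_div hc hcpos hmin hd
      set e := (c ^ m)⁻¹ * d with hedef
      have he : IsCen ρ₁ e := (hc.zpow m).inv.mul hd
      have hege : ∀ x, x ≤ e x := by
        intro x
        rw [hedef, Equiv.Perm.mul_apply]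
        have h1 := (strictMono_perm_inv (hc.zpow m).1).monotone (hm1 x)
        rwa [Equiv.Perm.inv_apply_self] at h1
      have helt : ∀ x, e x < c x := by
        intro x
        rw [hedef, Equiv.Perm.mul_apply]
        have h2 : d x < (c ^ m) (c x) := by
          have h3 : (c ^ m) (c x) = (c ^ (m + 1)) x := by
            rw [show m + 1 = m + 1 from rfl, zpow_add, zpow_one, Equiv.Perm.mul_apply]
          rw [h3]
          exact hm2 x
        have h4 := (strictMono_perm_inv (hc.zpow m).1) h2
        rwa [Equiv.Perm.inv_apply_self] at h4
      rcases he.trichotomy hmin with H | H | H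
      · refine ⟨m, fun x => ?_⟩
        have h5 := H x
        rw [hedef, Equiv.Perm.mul_apply] at h5
        have h6 := congrArg (c ^ m) h5
        rwa [Equiv.Perm.apply_inv_self] at h6
      · exfalso
        obtain ⟨x, hx⟩ := hleast e he H
        exact absurd (helt x) (not_lt.mpr hx)
      · exact absurd (H 0) (not_lt.mpr (hege 0))
    -- orbit of x₀ is discrete, contradicting accumulation at q
    set q := f₀.symm p with hqdef
    set v : ℤ → ℝ := fun m => (c ^ m) x₀ with hvdef
    have hvmono : StrictMono v := fun m m' hmm => perm_zpow_strict_exp hc hcpos hmm x₀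
    have hAne : {m : ℤ | v m < q}.Nonempty := by
      obtain ⟨n, hn⟩ := unbounded_orbit hc.1 hcpos q x₀
      refine ⟨-(n : ℤ), ?_⟩
      show (c ^ (-(n : ℤ))) x₀ < q
      have hn' : x₀ < (c ^ (n : ℤ)) q := by rw [zpow_natCast]; exact hn
      have h2 := (hc.zpow (-(n : ℤ))).1 hn'
      rwa [perm_zpow_cancel hc hcpos] at h2
    have hAbdd : BddAbove {m : ℤ | v m < q} := by
      obtain ⟨n, hn⟩ := unbounded_orbit hc.1 hcpos x₀ q
      refine ⟨(n : ℤ), ?_⟩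
      intro m hm
      by_contra hcc
      push_neg at hcc
      have h1 : v (n : ℤ) ≤ v m := (hvmono.monotone hcc.le)
      have h2 : q < v (n : ℤ) := by
        show q < (c ^ ((n : ℕ) : ℤ)) x₀
        rw [zpow_natCast]
        exact hn
      exact absurd hm (not_lt.mpr (h2.le.trans h1))
    set m₀ := sSup {m : ℤ | v m < q} with hm₀def
    have hm₀mem : v m₀ < q := Int.csSup_mem hAne hAbdd
    have hm₀ub : ∀ m : ℤ, m₀ < m → q ≤ v m := by
      intro m hm
      by_contra hcc
      push_neg at hcc
      have := le_csSup hAbdd (show m ∈ {m : ℤ | v m < q} from hcc)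
      omega
    -- a punctured neighborhood of q missing the orbit
    obtain ⟨δ, hδpos, hδ⟩ : ∃ δ : ℝ, 0 < δ ∧ ∀ m : ℤ, v m ≠ q → δ ≤ |v m - q| := by
      by_cases hq1 : v (m₀ + 1) = q
      · refine ⟨min (q - v m₀) (v (m₀ + 2) - q), ?_, ?_⟩
        · apply lt_min
          · linarith
          · have := hvmono (show m₀ + 1 < m₀ + 2 by omega)
            rw [hq1] at this
            linarith
        · intro m hm
          rcases le_or_gt m m₀ with hmm | hmm
          · have h1 : v m ≤ v m₀ := hvmono.monotone hmm
            rw [abs_sub_comm, abs_of_pos (by linarith)]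
            have := min_le_left (q - v m₀) (v (m₀ + 2) - q)
            linarith
          · have hmm2 : m₀ + 2 ≤ m := by
              rcases eq_or_lt_of_le (show m₀ + 1 ≤ m by omega) with he | hlt
              · exact absurd (he ▸ hq1) hm
              · omega
            have h1 : v (m₀ + 2) ≤ v m := hvmono.monotone hmm2
            have h2 : q < v (m₀ + 2) := by
              have := hvmono (show m₀ + 1 < m₀ + 2 by omega)
              rw [hq1] at this
              exact this
            rw [abs_of_pos (by linarith)]
            have := min_le_right (q - v m₀) (v (m₀ + 2) - q)
            linarith
      · have hq1' : q < v (m₀ + 1) :=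
          lt_of_le_of_ne (hm₀ub (m₀ + 1) (by omega)) (Ne.symm hq1)
        refine ⟨min (q - v m₀) (v (m₀ + 1) - q), lt_min (by linarith) (by linarith), ?_⟩
        intro m hm
        rcases le_or_gt m m₀ with hmm | hmm
        · have h1 : v m ≤ v m₀ := hvmono.monotone hmm
          rw [abs_sub_comm, abs_of_pos (by linarith)]
          have := min_le_left (q - v m₀) (v (m₀ + 1) - q)
          linarith
        · have h1 : v (m₀ + 1) ≤ v m := hvmono.monotone (by omega)
          rw [abs_of_pos (by linarith)]
          have := min_le_right (q - v m₀) (v (m₀ + 1) - q)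
          linarith
    -- continuity of f₀.symm at p gives an orbit point in the punctured neighborhood
    have hcont : ContinuousAt (⇑f₀.symm) p := f₀.symm.continuous.continuousAt
    rw [Metric.continuousAt_iff] at hcont
    obtain ⟨ε, hεpos, hε⟩ := hcont δ hδpos
    obtain ⟨f, hfS, hfne, hflt⟩ := hacc ε hεpos
    have hw : dist (f₀.symm (f x₀)) (f₀.symm p) < δ := by
      apply hε
      rw [Real.dist_eq]
      exact hflt
    have hwq : f₀.symm (f x₀) ≠ q := by
      rw [hqdef]
      intro heq
      exact hfne (f₀.symm.injective heq)
    obtain ⟨m, hmeq⟩ := hall (cOf f) (hcOfCen f hfS)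
    have hvm : v m = f₀.symm (f x₀) := by
      rw [hvdef]
      have := hmeq x₀
      rw [hcOfApp] at this
      exact this.symm
    have h1 := hδ m (by rw [hvm]; exact hwq)
    rw [hvm, Real.dist_eq] at *
    rw [hqdef] at h1
    exact absurd hw (not_lt.mpr h1)
  -- the conjugating homeomorphism
  have hstrict : StrictMono (phiF ρ₁ h) := phi_strictMono hmin hsmall hh hhpos hρ₁
  have hsurj : Function.Surjective (phiF ρ₁ h) := phi_surj hmin hsmall hh hhpos
  set φ₀ : ℝ ≃o ℝ := StrictMono.orderIsoOfSurjective _ hstrict hsurj with hφ₀def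
  have hcoe : ⇑φ₀.toHomeomorph = phiF ρ₁ h := rfl
  refine ⟨φ₀.toHomeomorph, fun γ => phiF ρ₁ h (ρ₁ γ 0), ?_, ?_, ?_⟩
  · intro γ γ'
    dsimp only
    have h1 : phiF ρ₁ h (ρ₁ (γ * γ') 0) = phiF ρ₁ h (ρ₁ γ (ρ₁ γ' 0)) := by
      rw [hρ₁]
    rw [h1, phi_rho hmin hsmall hh hhpos γ (ρ₁ γ' 0)]
    ring
  · intro γ x
    dsimp only
    rw [hcoe]
    exact phi_rho hmin hsmall hh hhpos γ x
  · intro γ y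
    dsimp only
    rw [hcoe, hf₀s]
    exact phi_rho hmin hsmall hh hhpos γ (f₀.symm y)
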